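/- arXiv:2109.00487 — 2 statements merged into one kernel-verified Lean document; each statement's English description precedes it below -/
import Mathlib

section
/- (Competitive screening.) Under the stated assumptions on ψ_L, ψ_H, c_L, c_H, θ_L, θ_H, a Pareto-optimal separating set exists, and every Pareto-optimal separating set involves costly screening: its costly-activity levels satisfy (y_L, y_H) ≠ (0, 0). -/
open Set

noncomputable section

/-- Type `i`'s worker payoff from an offer `(x, y, w)`: `w − ψ_i(x) − c_i(y)`. -/
def WPayoff (ψ c : ℝ → ℝ) (o : ℝ × ℝ × ℝ) : ℝ := o.2.2 - ψ o.1 - c o.2.1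

/-- A separating set: a pair of distinct offers in `[0,1] × [0,1] × ℝ` such that each
type weakly prefers its own offer and each offer earns the firm zero profit. -/
def SepSet (θL θH : ℝ) (ψL ψH cL cH : ℝ → ℝ) (oL oH : ℝ × ℝ × ℝ) : Prop :=
  oL.1 ∈ Icc (0 : ℝ) 1 ∧ oL.2.1 ∈ Icc (0 : ℝ) 1 ∧
  oH.1 ∈ Icc (0 : ℝ) 1 ∧ oH.2.1 ∈ Icc (0 : ℝ) 1 ∧
  oL ≠ oH ∧
  WPayoff ψL cL oL ≥ WPayoff ψL cL oH ∧
  WPayoff ψH cH oH ≥ WPayoff ψH cH oL ∧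
  oL.2.2 = θL * oL.1 ∧ oH.2.2 = θH * oH.1

/-- A Pareto-optimal separating set: no other separating set gives each type a weakly
higher worker payoff and some type a strictly higher one. -/
def ParetoOptSep (θL θH : ℝ) (ψL ψH cL cH : ℝ → ℝ) (oL oH : ℝ × ℝ × ℝ) : Prop :=
  SepSet θL θH ψL ψH cL cH oL oH ∧
    ¬ ∃ oL' oH' : ℝ × ℝ × ℝ, SepSet θL θH ψL ψH cL cH oL' oH' ∧
      WPayoff ψL cL oL' ≥ WPayoff ψL cL oL ∧
      WPayoff ψH cH oH' ≥ WPayoff ψH cH oH ∧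
      (WPayoff ψL cL oL' > WPayoff ψL cL oL ∨
        WPayoff ψH cH oH' > WPayoff ψH cH oH)

namespace Stmt17Aux

open Filter Topology

lemma hasDerivAt_of_Ioo {ψ ψ' : ℝ → ℝ}
    (hd : ∀ x ∈ Icc (0:ℝ) 1, HasDerivWithinAt ψ (ψ' x) (Icc 0 1) x)
    {x : ℝ} (hx : x ∈ Ioo (0:ℝ) 1) : HasDerivAt ψ (ψ' x) x :=
  (hd x (Ioo_subset_Icc_self hx)).hasDerivAt (Icc_mem_nhds hx.1 hx.2)

lemma contOn {ψ ψ' : ℝ → ℝ}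
    (hd : ∀ x ∈ Icc (0:ℝ) 1, HasDerivWithinAt ψ (ψ' x) (Icc 0 1) x) :
    ContinuousOn ψ (Icc 0 1) :=
  fun x hx => (hd x hx).continuousWithinAt

lemma deriv_lt_deriv {ψ ψ' : ℝ → ℝ}
    (hconv : StrictConvexOn ℝ (Icc 0 1) ψ)
    (hd : ∀ x ∈ Icc (0:ℝ) 1, HasDerivWithinAt ψ (ψ' x) (Icc 0 1) x)
    {a b : ℝ} (ha : a ∈ Icc (0:ℝ) 1) (hb : b ∈ Icc (0:ℝ) 1) (hab : a < b) :
    ψ' a < ψ' b :=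
  lt_trans (hconv.lt_slope_of_hasDerivWithinAt ha hb hab (hd a ha))
    (hconv.slope_lt_of_hasDerivWithinAt ha hb hab (hd b hb))

/-- Strict supporting line inequality. -/
lemma support_lt {ψ ψ' : ℝ → ℝ}
    (hconv : StrictConvexOn ℝ (Icc 0 1) ψ)
    (hd : ∀ x ∈ Icc (0:ℝ) 1, HasDerivWithinAt ψ (ψ' x) (Icc 0 1) x)
    {a b : ℝ} (ha : a ∈ Icc (0:ℝ) 1) (hb : b ∈ Icc (0:ℝ) 1) (hne : b ≠ a) :
    ψ a + ψ' a * (b - a) < ψ b := by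
  rcases lt_or_gt_of_ne hne with h | h
  · have hs := hconv.slope_lt_of_hasDerivWithinAt hb ha h (hd a ha)
    rw [slope_def_field] at hs
    have hba : (0:ℝ) < a - b := by linarith
    rw [div_lt_iff₀ hba] at hs
    nlinarith
  · have hs := hconv.lt_slope_of_hasDerivWithinAt ha hb h (hd a ha)
    rw [slope_def_field] at hs
    have hba : (0:ℝ) < b - a := by linarith
    rw [lt_div_iff₀ hba] at hs
    nlinarith

/-- If ψ'(xe) = θ, then xe is the strict maximizer of θ x − ψ x on [0,1]. -/
lemma strict_max {ψ ψ' : ℝ → ℝ} {θ xe : ℝ}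
    (hconv : StrictConvexOn ℝ (Icc 0 1) ψ)
    (hd : ∀ x ∈ Icc (0:ℝ) 1, HasDerivWithinAt ψ (ψ' x) (Icc 0 1) x)
    (hxe : xe ∈ Icc (0:ℝ) 1) (hder : ψ' xe = θ)
    {x : ℝ} (hx : x ∈ Icc (0:ℝ) 1) (hne : x ≠ xe) :
    θ * x - ψ x < θ * xe - ψ xe := by
  have := support_lt hconv hd hxe hx hne
  rw [hder] at this; nlinarith

/-- Mean value theorem on a subinterval of [0,1]. -/
lemma mvt {ψ ψ' : ℝ → ℝ}
    (hd : ∀ x ∈ Icc (0:ℝ) 1, HasDerivWithinAt ψ (ψ' x) (Icc 0 1) x)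
    {u v : ℝ} (hu : u ∈ Icc (0:ℝ) 1) (hv : v ∈ Icc (0:ℝ) 1) (huv : u < v) :
    ∃ ξ ∈ Ioo u v, ψ v - ψ u = ψ' ξ * (v - u) := by
  have hsub : Icc u v ⊆ Icc (0:ℝ) 1 := Icc_subset_Icc hu.1 hv.2
  have hc : ContinuousOn ψ (Icc u v) := (contOn hd).mono hsub
  have hdd : ∀ x ∈ Ioo u v, HasDerivAt ψ (ψ' x) x := by
    intro x hx
    exact hasDerivAt_of_Ioo hd ⟨lt_of_le_of_lt hu.1 hx.1, lt_of_lt_of_le hx.2 hv.2⟩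
  obtain ⟨ξ, hξ, hslope⟩ := exists_hasDerivAt_eq_slope ψ ψ' huv hc hdd
  refine ⟨ξ, hξ, ?_⟩
  rw [eq_div_iff (by linarith : v - u ≠ 0)] at hslope
  linarith [hslope]

lemma small_above {c : ℝ → ℝ} {d κ : ℝ}
    (hd0 : HasDerivWithinAt c d (Icc (0:ℝ) 1) 0) (hc0 : c 0 = 0) (hκ : d < κ) :
    ∃ δ > 0, ∀ y : ℝ, 0 < y → y ≤ δ → c y ≤ κ * y := by
  have ht := hasDerivWithinAt_iff_tendsto_slope.1 hd0
  have hev : ∀ᶠ y in 𝓝[Icc (0:ℝ) 1 \ {0}] 0, slope c 0 y < κ :=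
    ht.eventually (Filter.Tendsto.eventually_lt_const hκ tendsto_id)
  rw [eventually_nhdsWithin_iff, Metric.eventually_nhds_iff] at hev
  obtain ⟨δ, hδ, hball⟩ := hev
  refine ⟨min (δ/2) 1, by positivity, fun y hy hyδ => ?_⟩
  have hy1 : y ≤ 1 := le_trans hyδ (min_le_right _ _)
  have hyδ' : dist y 0 < δ := by
    rw [Real.dist_eq, sub_zero, abs_of_pos hy]
    calc y ≤ δ/2 := le_trans hyδ (min_le_left _ _)
    _ < δ := by linarith
  have := hball hyδ' ⟨⟨hy.le, hy1⟩, by simp [hy.ne']⟩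
  rw [slope_def_field, hc0] at this
  rw [div_lt_iff₀] at this <;> nlinarith

lemma small_below {c : ℝ → ℝ} {d κ : ℝ}
    (hd0 : HasDerivWithinAt c d (Icc (0:ℝ) 1) 0) (hc0 : c 0 = 0) (hκ : κ < d) :
    ∃ δ > 0, ∀ y : ℝ, 0 < y → y ≤ δ → κ * y ≤ c y := by
  have ht := hasDerivWithinAt_iff_tendsto_slope.1 hd0
  have hev : ∀ᶠ y in 𝓝[Icc (0:ℝ) 1 \ {0}] 0, κ < slope c 0 y :=
    ht.eventually (Filter.Tendsto.eventually_const_lt hκ tendsto_id)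
  rw [eventually_nhdsWithin_iff, Metric.eventually_nhds_iff] at hev
  obtain ⟨δ, hδ, hball⟩ := hev
  refine ⟨min (δ/2) 1, by positivity, fun y hy hyδ => ?_⟩
  have hy1 : y ≤ 1 := le_trans hyδ (min_le_right _ _)
  have hyδ' : dist y 0 < δ := by
    rw [Real.dist_eq, sub_zero, abs_of_pos hy]
    calc y ≤ δ/2 := le_trans hyδ (min_le_left _ _)
    _ < δ := by linarith
  have := hball hyδ' ⟨⟨hy.le, hy1⟩, by simp [hy.ne']⟩
  rw [slope_def_field, hc0] at this
  rw [lt_div_iff₀] at this <;> nlinarith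

end Stmt17Aux

set_option maxHeartbeats 1000000 in
/-- **Proposition 5 (competitive screening).** Under the stated assumptions, a
Pareto-optimal separating set exists, and every Pareto-optimal separating set
involves costly screening: `(y_L, y_H) ≠ (0, 0)`. -/
theorem stmt17
    (θL θH : ℝ) (hθL : 0 ≤ θL) (hθLH : θL < θH)
    (ψL ψH ψL' ψH' cL cH cL' cH' : ℝ → ℝ)
    -- ψ_i : strictly increasing, C¹, strictly convex on [0,1], ψ_i(0) = 0
    (hψLmono : StrictMonoOn ψL (Icc 0 1)) (hψHmono : StrictMonoOn ψH (Icc 0 1))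
    (hψLderiv : ∀ x ∈ Icc (0 : ℝ) 1, HasDerivWithinAt ψL (ψL' x) (Icc 0 1) x)
    (hψHderiv : ∀ x ∈ Icc (0 : ℝ) 1, HasDerivWithinAt ψH (ψH' x) (Icc 0 1) x)
    (hψL'c : ContinuousOn ψL' (Icc 0 1)) (hψH'c : ContinuousOn ψH' (Icc 0 1))
    (hψLconv : StrictConvexOn ℝ (Icc 0 1) ψL) (hψHconv : StrictConvexOn ℝ (Icc 0 1) ψH)
    (hψL0 : ψL 0 = 0) (hψH0 : ψH 0 = 0)
    -- the high type has lower marginal cost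
    (hmarg : ∀ x ∈ Icc (0 : ℝ) 1, ψH' x < ψL' x)
    -- efficient work levels, interior
    (xeL xeH : ℝ) (hxeL : xeL ∈ Ioo (0 : ℝ) 1) (hxeH : xeH ∈ Ioo (0 : ℝ) 1)
    (hxeLdef : ψL' xeL = θL) (hxeHdef : ψH' xeH = θH)
    -- adverse selection
    (hadv : θL * xeL - ψL xeL < θH * xeH - ψL xeH)
    -- separation with work allocations alone is possible
    (hsep : ∃ x : ℝ, xeL ≤ x ∧ x ≤ 1 ∧ θL * xeL - ψL xeL ≥ θH * x - ψL x)
    -- c_i : strictly increasing, C¹ on [0,1], c_i(0) = 0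
    (hcLmono : StrictMonoOn cL (Icc 0 1)) (hcHmono : StrictMonoOn cH (Icc 0 1))
    (hcLderiv : ∀ y ∈ Icc (0 : ℝ) 1, HasDerivWithinAt cL (cL' y) (Icc 0 1) y)
    (hcHderiv : ∀ y ∈ Icc (0 : ℝ) 1, HasDerivWithinAt cH (cH' y) (Icc 0 1) y)
    (hcL'c : ContinuousOn cL' (Icc 0 1)) (hcH'c : ContinuousOn cH' (Icc 0 1))
    (hcL0 : cL 0 = 0) (hcH0 : cH 0 = 0)
    -- a small amount of the costly signal is cheap for the high type and expensive
    -- for the low type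
    (hcL' : cL' 0 > ψL' 1) (hcH' : cH' 0 = 0) :
    (∃ oL oH : ℝ × ℝ × ℝ, ParetoOptSep θL θH ψL ψH cL cH oL oH) ∧
    ∀ oL oH : ℝ × ℝ × ℝ, ParetoOptSep θL θH ψL ψH cL cH oL oH →
      (oL.2.1, oH.2.1) ≠ ((0 : ℝ), (0 : ℝ)) := by
  have h01 : (0:ℝ) ≤ 1 := zero_le_one
  have hm0 : (0:ℝ) ∈ Icc (0:ℝ) 1 := ⟨le_refl 0, h01⟩
  have hm1 : (1:ℝ) ∈ Icc (0:ℝ) 1 := ⟨h01, le_refl 1⟩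
  have hmxeL : xeL ∈ Icc (0:ℝ) 1 := Ioo_subset_Icc_self hxeL
  have hmxeH : xeH ∈ Icc (0:ℝ) 1 := Ioo_subset_Icc_self hxeH
  -- xeL is the maximizer of θL x − ψL x
  have hmaxL : ∀ x ∈ Icc (0:ℝ) 1, θL * x - ψL x ≤ θL * xeL - ψL xeL := by
    intro x hx
    rcases eq_or_ne x xeL with rfl | h
    · exact le_refl _
    · exact (Stmt17Aux.strict_max hψLconv hψLderiv hmxeL hxeLdef hx h).le
  have huLepos : 0 < θL * xeL - ψL xeL := by
    have := Stmt17Aux.strict_max hψLconv hψLderiv hmxeL hxeLdef hm0 (ne_of_lt hxeL.1)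
    rw [hψL0] at this; linarith only [this]
  -- ψL − ψH strictly monotone on [0,1]
  have hdiffmono : StrictMonoOn (fun x => ψL x - ψH x) (Icc (0:ℝ) 1) := by
    apply strictMonoOn_of_deriv_pos (convex_Icc 0 1)
      ((Stmt17Aux.contOn hψLderiv).sub (Stmt17Aux.contOn hψHderiv))
    intro x hx
    rw [interior_Icc] at hx
    have hda : HasDerivAt (fun x => ψL x - ψH x) (ψL' x - ψH' x) x :=
      (Stmt17Aux.hasDerivAt_of_Ioo hψLderiv hx).sub (Stmt17Aux.hasDerivAt_of_Ioo hψHderiv hx)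
    rw [show deriv (ψL - ψH) x = ψL' x - ψH' x from hda.deriv]
    have := hmarg x (Ioo_subset_Icc_self hx)
    linarith only [this]
  have hA : 0 < ψL xeL - ψH xeL := by
    have := hdiffmono hm0 hmxeL hxeL.1
    simp only [hψL0, hψH0, sub_zero] at this
    linarith only [this]
  -- existence of the binding point xb
  obtain ⟨x₀, hx₀l, hx₀u, hx₀⟩ := hsep
  have hmx₀ : x₀ ∈ Icc (0:ℝ) 1 := ⟨le_trans hxeL.1.le hx₀l, hx₀u⟩
  have hφc : ContinuousOn (fun x => θH * x - ψL x) (Icc xeL x₀) :=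
    ((continuous_const.mul continuous_id).continuousOn.sub
      ((Stmt17Aux.contOn hψLderiv).mono (Icc_subset_Icc hmxeL.1 hmx₀.2)))
  have hmem : θL * xeL - ψL xeL ∈
      Icc ((fun x => θH * x - ψL x) x₀) ((fun x => θH * x - ψL x) xeL) := by
    constructor
    · simpa using hx₀
    · simp only [id]
      have := mul_le_mul_of_nonneg_right hθLH.le hxeL.1.le
      linarith only [this]
  obtain ⟨xb, hxbmem, hxbval⟩ := intermediate_value_Icc' hx₀l hφc hmem
  have hmxb : xb ∈ Icc (0:ℝ) 1 := ⟨le_trans hmxeL.1 hxbmem.1, le_trans hxbmem.2 hmx₀.2⟩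
  have hxbval' : θH * xb - ψL xb = θL * xeL - ψL xeL := hxbval
  have hICH0 : θH * xb - ψH xb ≥ θL * xeL - ψL xeL + (ψL xeL - ψH xeL) := by
    have hmono := hdiffmono.monotoneOn hmxeL hmxb hxbmem.1
    change ψL xeL - ψH xeL ≤ ψL xb - ψH xb at hmono
    linarith only [hmono, hxbval']
  -- extended continuous versions of the primitives
  set ΨL : ℝ → ℝ := IccExtend h01 ((Icc (0:ℝ) 1).restrict ψL) with hΨLdef
  set ΨH : ℝ → ℝ := IccExtend h01 ((Icc (0:ℝ) 1).restrict ψH) with hΨHdef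
  set CL : ℝ → ℝ := IccExtend h01 ((Icc (0:ℝ) 1).restrict cL) with hCLdef
  set CH : ℝ → ℝ := IccExtend h01 ((Icc (0:ℝ) 1).restrict cH) with hCHdef
  have hΨLeq : ∀ x ∈ Icc (0:ℝ) 1, ΨL x = ψL x := fun x hx => by
    rw [hΨLdef, IccExtend_of_mem h01 _ hx]; rfl
  have hΨHeq : ∀ x ∈ Icc (0:ℝ) 1, ΨH x = ψH x := fun x hx => by
    rw [hΨHdef, IccExtend_of_mem h01 _ hx]; rfl
  have hCLeq : ∀ x ∈ Icc (0:ℝ) 1, CL x = cL x := fun x hx => by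
    rw [hCLdef, IccExtend_of_mem h01 _ hx]; rfl
  have hCHeq : ∀ x ∈ Icc (0:ℝ) 1, CH x = cH x := fun x hx => by
    rw [hCHdef, IccExtend_of_mem h01 _ hx]; rfl
  have hΨLc : Continuous ΨL := Continuous.Icc_extend' ((Stmt17Aux.contOn hψLderiv).restrict)
  have hΨHc : Continuous ΨH := Continuous.Icc_extend' ((Stmt17Aux.contOn hψHderiv).restrict)
  have hCLc : Continuous CL := Continuous.Icc_extend' ((Stmt17Aux.contOn hcLderiv).restrict)
  have hCHc : Continuous CH := Continuous.Icc_extend' ((Stmt17Aux.contOn hcHderiv).restrict)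
  -- the payoff functions in reduced coordinates
  set UL : (ℝ × ℝ) × ℝ × ℝ → ℝ := fun p => θL * p.1.1 - ΨL p.1.1 - CL p.1.2 with hULdef
  set UH : (ℝ × ℝ) × ℝ × ℝ → ℝ := fun p => θH * p.2.1 - ΨH p.2.1 - CH p.2.2 with hUHdef
  set EL : (ℝ × ℝ) × ℝ × ℝ → ℝ := fun p => θH * p.2.1 - ΨL p.2.1 - CL p.2.2 with hELdef
  set EH : (ℝ × ℝ) × ℝ × ℝ → ℝ := fun p => θL * p.1.1 - ΨH p.1.1 - CH p.1.2 with hEHdef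
  have hULc : Continuous UL := by fun_prop
  have hUHc : Continuous UH := by fun_prop
  have hELc : Continuous EL := by fun_prop
  have hEHc : Continuous EH := by fun_prop
  set c0 : ℝ := (θL * xeL - ψL xeL) + (θH * xb - ψH xb) with hc0def
  have hc0pos : 0 < c0 := by rw [hc0def]; linarith only [huLepos, hICH0, hA]
  set K : Set ((ℝ × ℝ) × ℝ × ℝ) :=
    ((Icc (0:ℝ) 1 ×ˢ Icc (0:ℝ) 1) ×ˢ (Icc (0:ℝ) 1 ×ˢ Icc (0:ℝ) 1)) ∩
      ({p | EL p ≤ UL p} ∩ ({p | EH p ≤ UH p} ∩ {p | c0 ≤ UL p + UH p})) with hKdef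
  have hKcomp : IsCompact K :=
    (((isCompact_Icc.prod isCompact_Icc).prod (isCompact_Icc.prod isCompact_Icc)).inter_right
      ((isClosed_le hELc hULc).inter
        ((isClosed_le hEHc hUHc).inter (isClosed_le continuous_const (hULc.add hUHc)))))
  have hcLnn : ∀ y ∈ Icc (0:ℝ) 1, 0 ≤ cL y := by
    intro y hy
    rcases eq_or_lt_of_le hy.1 with h | h
    · rw [← h, hcL0]
    · have := hcLmono hm0 hy h; rw [hcL0] at this; linarith only [this]
  have hcHnn : ∀ y ∈ Icc (0:ℝ) 1, 0 ≤ cH y := by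
    intro y hy
    rcases eq_or_lt_of_le hy.1 with h | h
    · rw [← h, hcH0]
    · have := hcHmono hm0 hy h; rw [hcH0] at this; linarith only [this]
  have hp0 : (((xeL, 0), (xb, 0)) : (ℝ × ℝ) × ℝ × ℝ) ∈ K := by
    refine ⟨⟨⟨hmxeL, hm0⟩, hmxb, hm0⟩, ?_, ?_, ?_⟩
    · show EL _ ≤ UL _
      rw [hULdef, hELdef]
      simp only [hΨLeq _ hmxeL, hΨLeq _ hmxb, hCLeq _ hm0]
      linarith only [hxbval']
    · show EH _ ≤ UH _
      rw [hUHdef, hEHdef]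
      simp only [hΨHeq _ hmxeL, hΨHeq _ hmxb, hCHeq _ hm0]
      linarith only [hICH0]
    · show c0 ≤ UL _ + UH _
      rw [hULdef, hUHdef, hc0def]
      simp only [hΨLeq _ hmxeL, hΨHeq _ hmxb, hCLeq _ hm0, hCHeq _ hm0, hcL0, hcH0]
      linarith only []
  obtain ⟨p, hpK, hpmax⟩ :=
    hKcomp.exists_isMaxOn ⟨_, hp0⟩ ((hULc.add hUHc).continuousOn)
  obtain ⟨⟨⟨hp11, hp12⟩, hp21, hp22⟩, hpEL, hpEH, hpsum⟩ := hpK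
  constructor
  · -- existence of a Pareto-optimal separating set
    refine ⟨(p.1.1, p.1.2, θL * p.1.1), (p.2.1, p.2.2, θH * p.2.1), ?_, ?_⟩
    · refine ⟨hp11, hp12, hp21, hp22, ?_, ?_, ?_, rfl, rfl⟩
      · -- distinct
        intro h
        have e1 : p.1.1 = p.2.1 := congrArg (fun o => o.1) h
        have e2 : p.1.2 = p.2.2 := congrArg (fun o => o.2.1) h
        have e3 : θL * p.1.1 = θH * p.2.1 := congrArg (fun o => o.2.2) h
        have hx0 : p.1.1 = 0 := by
          have h' : (θH - θL) * p.1.1 = 0 := by rw [← e1] at e3; linarith only [e3]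
          have h'' : θH - θL ≠ 0 := sub_ne_zero.mpr hθLH.ne'
          exact (mul_eq_zero.1 h').resolve_left h''
        have hUL0 : UL p ≤ 0 := by
          rw [hULdef]
          simp only [hx0, hΨLeq _ (hx0 ▸ hp11), hψL0]
          have := hcLnn _ hp12
          rw [hCLeq _ hp12]
          linarith only [this]
        have hUH0 : UH p ≤ 0 := by
          rw [hUHdef]
          have hx0' : p.2.1 = 0 := e1 ▸ hx0
          simp only [hx0', hΨHeq _ (hx0' ▸ hp21), hψH0]
          have := hcHnn _ hp22
          rw [hCHeq _ hp22]
          linarith only [this]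
        have := hpsum
        simp only [mem_setOf_eq] at this
        linarith only [this, hUL0, hUH0, hc0pos]
      · -- IC for L
        show WPayoff ψL cL _ ≥ WPayoff ψL cL _
        have h1 : WPayoff ψL cL (p.1.1, p.1.2, θL * p.1.1) = UL p := by
          simp [WPayoff, hULdef, hΨLeq _ hp11, hCLeq _ hp12]
        have h2 : WPayoff ψL cL (p.2.1, p.2.2, θH * p.2.1) = EL p := by
          simp [WPayoff, hELdef, hΨLeq _ hp21, hCLeq _ hp22]
        rw [h1, h2]; exact hpEL
      · show WPayoff ψH cH _ ≥ WPayoff ψH cH _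
        have h1 : WPayoff ψH cH (p.2.1, p.2.2, θH * p.2.1) = UH p := by
          simp [WPayoff, hUHdef, hΨHeq _ hp21, hCHeq _ hp22]
        have h2 : WPayoff ψH cH (p.1.1, p.1.2, θL * p.1.1) = EH p := by
          simp [WPayoff, hEHdef, hΨHeq _ hp11, hCHeq _ hp12]
        rw [h1, h2]; exact hpEH
    · -- Pareto optimality
      rintro ⟨oL', oH', hs', hge1, hge2, hstrict⟩
      obtain ⟨h1, h2, h3, h4, hne', hICL', hICH', hwL', hwH'⟩ := hs'
      set p' : (ℝ × ℝ) × ℝ × ℝ := ((oL'.1, oL'.2.1), (oH'.1, oH'.2.1)) with hp'def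
      have hWL' : WPayoff ψL cL oL' = UL p' := by
        simp [WPayoff, hULdef, hp'def, hwL', hΨLeq _ h1, hCLeq _ h2]
      have hWH' : WPayoff ψH cH oH' = UH p' := by
        simp [WPayoff, hUHdef, hp'def, hwH', hΨHeq _ h3, hCHeq _ h4]
      have hEL' : WPayoff ψL cL oH' = EL p' := by
        simp [WPayoff, hELdef, hp'def, hwH', hΨLeq _ h3, hCLeq _ h4]
      have hEH' : WPayoff ψH cH oL' = EH p' := by
        simp [WPayoff, hEHdef, hp'def, hwL', hΨHeq _ h1, hCHeq _ h2]
      have hWLp : WPayoff ψL cL (p.1.1, p.1.2, θL * p.1.1) = UL p := by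
        simp [WPayoff, hULdef, hΨLeq _ hp11, hCLeq _ hp12]
      have hWHp : WPayoff ψH cH (p.2.1, p.2.2, θH * p.2.1) = UH p := by
        simp [WPayoff, hUHdef, hΨHeq _ hp21, hCHeq _ hp22]
      rw [hWL', hWLp] at hge1
      rw [hWH', hWHp] at hge2
      have hsum' : c0 ≤ UL p' + UH p' := by
        have := hpsum; simp only [mem_setOf_eq] at this; linarith only [this, hge1, hge2]
      have hp'K : p' ∈ K := by
        refine ⟨⟨⟨h1, h2⟩, h3, h4⟩, ?_, ?_, hsum'⟩
        · show EL p' ≤ UL p'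
          rw [← hWL', ← hEL']; exact hICL'
        · show EH p' ≤ UH p'
          rw [← hWH', ← hEH']; exact hICH'
      have hle := hpmax hp'K
      simp only [mem_setOf_eq, Pi.add_apply] at hle
      rcases hstrict with h | h
      · rw [hWL', hWLp] at h; linarith only [h, hge2, hle]
      · rw [hWH', hWHp] at h; linarith only [h, hge1, hle]
  · -- every Pareto-optimal separating set uses the costly activity
    intro oL oH hPO heq
    rw [Prod.mk.injEq] at heq
    obtain ⟨hyL0, hyH0⟩ := heq
    obtain ⟨hmxL, hmyL, hmxH, hmyH, hne, hICL, hICH, hwL, hwH⟩ := hPO.1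
    have hWLo : WPayoff ψL cL oL = θL * oL.1 - ψL oL.1 := by
      simp [WPayoff, hwL, hyL0, hcL0]
    have hWHo : WPayoff ψH cH oH = θH * oH.1 - ψH oH.1 := by
      simp [WPayoff, hwH, hyH0, hcH0]
    have hWLoH : WPayoff ψL cL oH = θH * oH.1 - ψL oH.1 := by
      simp [WPayoff, hwH, hyH0, hcL0]
    have hWHoL : WPayoff ψH cH oL = θL * oL.1 - ψH oL.1 := by
      simp [WPayoff, hwL, hyL0, hcH0]
    have hICL2 : θL * oL.1 - ψL oL.1 ≥ θH * oH.1 - ψL oH.1 := by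
      rw [← hWLo, ← hWLoH]; exact hICL
    have hICH2 : θH * oH.1 - ψH oH.1 ≥ θL * oL.1 - ψH oL.1 := by
      rw [← hWHo, ← hWHoL]; exact hICH
    -- oH.1 ≠ xeH
    have hxHne : oH.1 ≠ xeH := by
      intro h
      have h1 : θL * oL.1 - ψL oL.1 ≤ θL * xeL - ψL xeL := hmaxL _ hmxL
      rw [h] at hICL2
      linarith only [h1, hICL2, hadv]
    -- sign and magnitude of distortion
    have hψH'ne : ψH' oH.1 ≠ θH := by
      rcases lt_or_gt_of_ne hxHne with h | h
      · have := Stmt17Aux.deriv_lt_deriv hψHconv hψHderiv hmxH hmxeH h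
        rw [hxeHdef] at this; exact ne_of_lt this
      · have := Stmt17Aux.deriv_lt_deriv hψHconv hψHderiv hmxeH hmxH h
        rw [hxeHdef] at this; exact (ne_of_gt this)
    set a : ℝ := |θH - ψH' oH.1| with hadef
    have hapos : 0 < a := abs_pos.mpr (sub_ne_zero.mpr (Ne.symm hψH'ne))
    -- continuity of ψH' at oH.1
    obtain ⟨δ, hδpos, hδ⟩ :=
      Metric.continuousWithinAt_iff.1 (hψH'c oH.1 hmxH) (a/2) (by positivity)
    -- uniform bound on ψL'
    obtain ⟨C, hC⟩ := isCompact_Icc.exists_bound_of_continuousOn hψL'c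
    have hC0 : 0 ≤ C := le_trans (norm_nonneg _) (hC 0 hm0)
    set M : ℝ := |θH| + C + 1 with hMdef
    have hMpos : 0 < M := by
      have := abs_nonneg θH; rw [hMdef]; linarith only [this, hC0]
    -- positivity of cL' 0
    have hcL0pos : 0 < cL' 0 := by
      have h1 : ψL' xeL < ψL' 1 := Stmt17Aux.deriv_lt_deriv hψLconv hψLderiv hmxeL hm1 hxeL.2
      rw [hxeLdef] at h1; linarith only [h1, hcL', hθL]
    obtain ⟨y1, hy1pos, hy1⟩ := Stmt17Aux.small_below (hcLderiv 0 hm0) hcL0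
      (by linarith only [hcL0pos] : cL' 0 / 2 < cL' 0)
    set κ : ℝ := a * cL' 0 / (8 * M) with hκdef
    have hκpos : 0 < κ := by rw [hκdef]; positivity
    obtain ⟨y2, hy2pos, hy2⟩ := Stmt17Aux.small_above (hcHderiv 0 hm0) hcH0
      (by rw [hcH']; exact hκpos)
    have habs : 0 < |xeH - oH.1| := abs_pos.mpr (sub_ne_zero.mpr (Ne.symm hxHne))
    set m3 : ℝ := min 1 (min y1 y2) with hm3def
    have hm3pos : 0 < m3 := lt_min one_pos (lt_min hy1pos hy2pos)
    set ε : ℝ := min (min |xeH - oH.1| (δ/2)) (cL' 0 / (2*M) * m3) with hεdef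
    have hεpos : 0 < ε := lt_min (lt_min habs (by positivity)) (by positivity)
    have hεabs : ε ≤ |xeH - oH.1| := le_trans (min_le_left _ _) (min_le_left _ _)
    have hεδ : ε < δ := by
      have h1 : ε ≤ min |xeH - oH.1| (δ/2) := min_le_left _ _
      have h2 : min |xeH - oH.1| (δ/2) ≤ δ/2 := min_le_right _ _
      linarith only [h1, h2, hδpos]
    set y : ℝ := 2*M/cL' 0 * ε with hydef
    have hypos : 0 < y := by rw [hydef]; positivity
    have hym3 : y ≤ m3 := by
      have h1 : ε ≤ cL' 0/(2*M) * m3 := min_le_right _ _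
      have h2 : 2*M/cL' 0 * ε ≤ 2*M/cL' 0 * (cL' 0/(2*M) * m3) :=
        mul_le_mul_of_nonneg_left h1 (by positivity)
      have h3 : 2*M/cL' 0 * (cL' 0/(2*M) * m3) = m3 := by
        field_simp
      rw [hydef]; rw [h3] at h2; exact h2
    have hyle1 : y ≤ 1 := le_trans hym3 (min_le_left _ _)
    have hyy1 : y ≤ y1 := le_trans hym3 (le_trans (min_le_right _ _) (min_le_left _ _))
    have hyy2 : y ≤ y2 := le_trans hym3 (le_trans (min_le_right _ _) (min_le_right _ _))
    have hmy : y ∈ Icc (0:ℝ) 1 := ⟨hypos.le, hyle1⟩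
    have h2L : cL' 0 / 2 * y = M * ε := by
      rw [hydef]; field_simp
    have h2H : κ * y = a/4 * ε := by
      rw [hκdef, hydef]; field_simp; ring
    clear_value a M κ m3 ε y
    have hcLy : M * ε ≤ cL y := by
      have h1 := hy1 y hypos hyy1
      linarith only [h1, h2L]
    have hcHy : cH y ≤ a/4 * ε := by
      have h1 := hy2 y hypos hyy2
      linarith only [h1, h2H]
    -- construct the improved offer for H
    -- two cases according to the direction of the distortion
    have key : ∃ x' : ℝ, x' ∈ Icc (0:ℝ) 1 ∧
        (θH * x' - ψH x') - (θH * oH.1 - ψH oH.1) ≥ a/2 * ε ∧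
        (θH * x' - ψL x') - (θH * oH.1 - ψL oH.1) ≤ M * ε := by
      rcases lt_or_gt_of_ne hxHne with hlt | hgt
      · -- oH.1 < xeH ; move right by ε
        have hεle : ε ≤ xeH - oH.1 := by
          rwa [abs_of_pos (by linarith only [hlt])] at hεabs
        have hx'mem : oH.1 + ε ∈ Icc (0:ℝ) 1 :=
          ⟨by linarith only [hmxH.1, hεpos], by linarith only [hmxeH.2, hεle]⟩
        have hlt' : oH.1 < oH.1 + ε := by linarith only [hεpos]
        have haval : a = θH - ψH' oH.1 := by
          have := Stmt17Aux.deriv_lt_deriv hψHconv hψHderiv hmxH hmxeH hlt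
          rw [hxeHdef] at this
          rw [hadef, abs_of_pos (by linarith only [this])]
        refine ⟨oH.1 + ε, hx'mem, ?_, ?_⟩
        · obtain ⟨ξ, hξ, hξeq⟩ := Stmt17Aux.mvt hψHderiv hmxH hx'mem hlt'
          have hξmem : ξ ∈ Icc (0:ℝ) 1 :=
            ⟨le_trans hmxH.1 hξ.1.le, le_trans hξ.2.le hx'mem.2⟩
          have hdist : dist ξ oH.1 < δ := by
            rw [Real.dist_eq, abs_of_pos (by linarith only [hξ.1] : (0:ℝ) < ξ - oH.1)]
            linarith only [hξ.2, hεδ]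
          have hclose := hδ hξmem hdist
          rw [Real.dist_eq, abs_lt] at hclose
          have hsimp : oH.1 + ε - oH.1 = ε := by ring
          rw [hsimp] at hξeq
          have hstep : a/2 * ε ≤ (θH - ψH' ξ) * ε :=
            mul_le_mul_of_nonneg_right (by linarith only [hclose.2, haval]) hεpos.le
          linarith only [hstep, hξeq]
        · obtain ⟨ξ', hξ', hξ'eq⟩ := Stmt17Aux.mvt hψLderiv hmxH hx'mem hlt'
          have hξ'mem : ξ' ∈ Icc (0:ℝ) 1 :=
            ⟨le_trans hmxH.1 hξ'.1.le, le_trans hξ'.2.le hx'mem.2⟩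
          have hbd := hC ξ' hξ'mem
          rw [Real.norm_eq_abs, abs_le] at hbd
          have hθbd := le_abs_self θH
          have hsimp : oH.1 + ε - oH.1 = ε := by ring
          rw [hsimp] at hξ'eq
          have hstep : (θH - ψL' ξ') * ε ≤ M * ε :=
            mul_le_mul_of_nonneg_right (by linarith only [hbd.1, hθbd, hMdef]) hεpos.le
          linarith only [hstep, hξ'eq]
      · -- xeH < oH.1 ; move left by ε
        have hεle : ε ≤ oH.1 - xeH := by
          rw [abs_of_neg (by linarith only [hgt])] at hεabs; linarith only [hεabs]
        have hx'mem : oH.1 - ε ∈ Icc (0:ℝ) 1 :=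
          ⟨by linarith only [hmxeH.1, hεle], by linarith only [hmxH.2, hεpos]⟩
        have hlt' : oH.1 - ε < oH.1 := by linarith only [hεpos]
        have haval : a = ψH' oH.1 - θH := by
          have := Stmt17Aux.deriv_lt_deriv hψHconv hψHderiv hmxeH hmxH hgt
          rw [hxeHdef] at this
          rw [hadef, abs_of_neg (by linarith only [this])]; ring
        refine ⟨oH.1 - ε, hx'mem, ?_, ?_⟩
        · obtain ⟨ξ, hξ, hξeq⟩ := Stmt17Aux.mvt hψHderiv hx'mem hmxH hlt'
          have hξmem : ξ ∈ Icc (0:ℝ) 1 :=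
            ⟨le_trans hx'mem.1 hξ.1.le, le_trans hξ.2.le hmxH.2⟩
          have hdist : dist ξ oH.1 < δ := by
            rw [Real.dist_eq, abs_of_neg (by linarith only [hξ.2] : ξ - oH.1 < 0)]
            linarith only [hξ.1, hεδ]
          have hclose := hδ hξmem hdist
          rw [Real.dist_eq, abs_lt] at hclose
          have hsimp : oH.1 - (oH.1 - ε) = ε := by ring
          rw [hsimp] at hξeq
          have hstep : a/2 * ε ≤ (ψH' ξ - θH) * ε :=
            mul_le_mul_of_nonneg_right (by linarith only [hclose.1, haval]) hεpos.le
          linarith only [hstep, hξeq]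
        · obtain ⟨ξ', hξ', hξ'eq⟩ := Stmt17Aux.mvt hψLderiv hx'mem hmxH hlt'
          have hξ'mem : ξ' ∈ Icc (0:ℝ) 1 :=
            ⟨le_trans hx'mem.1 hξ'.1.le, le_trans hξ'.2.le hmxH.2⟩
          have hbd := hC ξ' hξ'mem
          rw [Real.norm_eq_abs, abs_le] at hbd
          have hθbd := neg_abs_le θH
          have hsimp : oH.1 - (oH.1 - ε) = ε := by ring
          rw [hsimp] at hξ'eq
          have hstep : (ψL' ξ' - θH) * ε ≤ M * ε :=
            mul_le_mul_of_nonneg_right (by linarith only [hbd.2, hθbd, hMdef]) hεpos.le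
          linarith only [hstep, hξ'eq]
    obtain ⟨x', hx'mem, hgain, hchg⟩ := key
    -- the improved offer
    apply hPO.2
    refine ⟨oL, (x', y, θH * x'), ?_, le_refl _, ?_, Or.inr ?_⟩
    · refine ⟨hmxL, hmyL, hx'mem, hmy, ?_, ?_, ?_, hwL, rfl⟩
      · intro h
        have := congrArg (fun o => o.2.1) h
        simp only at this
        rw [hyL0] at this
        exact absurd this.symm (ne_of_gt hypos)
      · show WPayoff ψL cL oL ≥ WPayoff ψL cL (x', y, θH * x')
        have hR : WPayoff ψL cL (x', y, θH * x') = θH * x' - ψL x' - cL y := by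
          simp [WPayoff]
        rw [hWLo, hR]
        linarith only [hcLy, hchg, hICL2]
      · show WPayoff ψH cH (x', y, θH * x') ≥ WPayoff ψH cH oL
        have hR : WPayoff ψH cH (x', y, θH * x') = θH * x' - ψH x' - cH y := by
          simp [WPayoff]
        rw [hR, hWHoL]
        have haε : (0:ℝ) ≤ a * ε := mul_nonneg hapos.le hεpos.le
        linarith only [hgain, hcHy, hICH2, haε]
    · -- H weakly better
      have hR : WPayoff ψH cH (x', y, θH * x') = θH * x' - ψH x' - cH y := by
        simp [WPayoff]
      rw [hR, hWHo]
      have haε : (0:ℝ) < a * ε := mul_pos hapos hεpos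
      linarith only [hgain, hcHy, haε]
    · have hR : WPayoff ψH cH (x', y, θH * x') = θH * x' - ψH x' - cH y := by
        simp [WPayoff]
      rw [hR, hWHo]
      have haε : (0:ℝ) < a * ε := mul_pos hapos hεpos
      linarith only [hgain, hcHy, haε]
end
end

section
/- Consider the two-type screening problem with Θ = X = {0, 1}, types uniformly distributed, u(x, θ) = θx, and v(x, θ) = κ(1/2 − θ)x for a constant κ > 2. The mechanism x(0) = 1, t(0) = 0, x(1) = 0, t(1) = −1 is an optimal solution of the downward-IC program, and it violates the upward constraint IC[0→1]; moreover, no optimal solution of the downward-IC program satisfies all IC constraints. -/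
noncomputable section

/-- Agent utility `u(x, θ) = θ x`. -/
def uEx (x θ : ℝ) : ℝ := θ * x

/-- Principal utility `v(x, θ) = κ (1/2 − θ) x`. -/
def vEx (κ x θ : ℝ) : ℝ := κ * (1 / 2 - θ) * x

/-- Feasibility for the downward-IC program of the two-type example: allocations in
`{0, 1}`, the downward constraint IC[1→0], and both IR constraints. -/
def DFeasEx (x0 x1 t0 t1 : ℝ) : Prop :=
  x0 ∈ ({0, 1} : Set ℝ) ∧ x1 ∈ ({0, 1} : Set ℝ) ∧
    uEx x1 1 - t1 ≥ uEx x0 1 - t0 ∧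
    uEx x0 0 - t0 ≥ 0 ∧ uEx x1 1 - t1 ≥ 0

/-- The principal's objective in the two-type example. -/
def ObjEx (κ x0 x1 t0 t1 : ℝ) : ℝ :=
  (1 / 2) * (vEx κ x0 0 + t0) + (1 / 2) * (vEx κ x1 1 + t1)

/-- **Failure of downward sufficiency without a sorting condition.**
With `Θ = X = {0,1}`, uniform types, `u(x,θ) = θx`, `v(x,θ) = κ(1/2−θ)x`, `κ > 2`:
the mechanism `x(0)=1, t(0)=0, x(1)=0, t(1)=−1` is optimal for the downward-IC
program, violates the upward constraint IC[0→1], and no optimal solution of the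
downward-IC program satisfies all IC constraints. -/
theorem stmt18 (κ : ℝ) (hκ : 2 < κ) :
    DFeasEx 1 0 0 (-1) ∧
    (∀ x0 x1 t0 t1 : ℝ, DFeasEx x0 x1 t0 t1 →
      ObjEx κ x0 x1 t0 t1 ≤ ObjEx κ 1 0 0 (-1)) ∧
    ¬ (uEx 1 0 - 0 ≥ uEx 0 0 - (-1)) ∧
    (∀ x0 x1 t0 t1 : ℝ, DFeasEx x0 x1 t0 t1 →
      (∀ x0' x1' t0' t1' : ℝ, DFeasEx x0' x1' t0' t1' →
        ObjEx κ x0' x1' t0' t1' ≤ ObjEx κ x0 x1 t0 t1) →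
      ¬ (uEx x0 0 - t0 ≥ uEx x1 0 - t1 ∧ uEx x1 1 - t1 ≥ uEx x0 1 - t0)) := by
  have hfeas : DFeasEx 1 0 0 (-1) :=
    ⟨by norm_num, by norm_num, by norm_num [uEx], by norm_num [uEx], by norm_num [uEx]⟩
  refine ⟨hfeas, ?_, by norm_num [uEx], ?_⟩
  · rintro x0 x1 t0 t1 ⟨hx0, hx1, hic, hir0, hir1⟩
    simp only [Set.mem_insert_iff, Set.mem_singleton_iff] at hx0 hx1
    simp only [uEx, ObjEx, vEx] at *
    rcases hx0 with h | h <;> rcases hx1 with h' | h' <;> subst h <;> subst h' <;> nlinarith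
  · rintro x0 x1 t0 t1 ⟨hx0, hx1, hic, hir0, hir1⟩ hopt ⟨hA, hB⟩
    have hle := hopt 1 0 0 (-1) hfeas
    simp only [Set.mem_insert_iff, Set.mem_singleton_iff] at hx0 hx1
    simp only [uEx, ObjEx, vEx] at *
    rcases hx0 with h | h <;> rcases hx1 with h' | h' <;> subst h <;> subst h' <;> nlinarith
end
end
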